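/- Let R be a commutative ring and J an ideal contained in the Jacobson radical of R. Then for each n ≥ 2, GL_n(R) = GE_n(R) if and only if GL_n(R/J) = GE_n(R/J). -/

import Mathlib

open Matrix
/-- The set of elementary matrices in `GL n R`. -/
def ElementaryMatrices (R : Type) [CommRing R] (n : ℕ) : Set (GL (Fin n) R) :=
  {M | ∃ (i j : Fin n) (r : R), i ≠ j ∧
    (M : Matrix (Fin n) (Fin n) R) = 1 + Matrix.single i j r}

/-- `E_n(R)`, the subgroup of `GL n R` generated by elementary matrices. -/
def ElementarySubgroup (R : Type) [CommRing R] (n : ℕ) : Subgroup (GL (Fin n) R) :=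
  Subgroup.closure (ElementaryMatrices R n)

/-- The set of invertible diagonal matrices in `GL n R`. -/
def DiagonalMatrices (R : Type) [CommRing R] (n : ℕ) : Set (GL (Fin n) R) :=
  {M | ∃ d : Fin n → Rˣ,
    (M : Matrix (Fin n) (Fin n) R) = Matrix.diagonal (fun i => (d i : R))}

/-- `GE_n(R)`, the subgroup of `GL n R` generated by elementary and diagonal matrices. -/
def GESubgroup (R : Type) [CommRing R] (n : ℕ) : Subgroup (GL (Fin n) R) :=
  Subgroup.closure (ElementaryMatrices R n ∪ DiagonalMatrices R n)

namespace GEAux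

variable {R : Type} [CommRing R] {n : ℕ}

lemma elem_mul_elem (i j : Fin n) (hij : i ≠ j) (a b : R) :
    (1 + single i j a) * (1 + single i j b)
      = 1 + single i j (a + b) := by
  rw [add_mul, mul_add, mul_add, one_mul, mul_one,
    Matrix.single_mul_single_of_ne a i j i hij.symm b, single_add, one_mul]
  abel

/-- An elementary matrix as an element of `GL n R`. -/
def elemGL (i j : Fin n) (hij : i ≠ j) (a : R) : GL (Fin n) R where
  val := 1 + single i j a
  inv := 1 + single i j (-a)
  val_inv := by rw [elem_mul_elem i j hij, add_neg_cancel]; simp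
  inv_val := by rw [elem_mul_elem i j hij, neg_add_cancel]; simp

@[simp] lemma elemGL_val (i j : Fin n) (hij : i ≠ j) (a : R) :
    (elemGL i j hij a : Matrix (Fin n) (Fin n) R) = 1 + single i j a := rfl

lemma elemGL_mem (i j : Fin n) (hij : i ≠ j) (a : R) :
    elemGL i j hij a ∈ GESubgroup R n :=
  Subgroup.subset_closure (Or.inl ⟨i, j, a, hij, rfl⟩)

/-- A diagonal matrix of units as an element of `GL n R`. -/
def diagGL (d : Fin n → Rˣ) : GL (Fin n) R where
  val := diagonal fun i => (d i : R)
  inv := diagonal fun i => ((d i)⁻¹ : Rˣ)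
  val_inv := by rw [diagonal_mul_diagonal]; simp
  inv_val := by rw [diagonal_mul_diagonal]; simp

@[simp] lemma diagGL_val (d : Fin n → Rˣ) :
    (diagGL d : Matrix (Fin n) (Fin n) R) = diagonal fun i => (d i : R) := rfl

lemma diagGL_mem (d : Fin n → Rˣ) : diagGL d ∈ GESubgroup R n :=
  Subgroup.subset_closure (Or.inr ⟨d, rfl⟩)

lemma isUnit_of_isUnit_mk {J : Ideal R} (hJ : J ≤ Ideal.jacobson ⊥) {a : R}
    (h : IsUnit (Ideal.Quotient.mk J a)) : IsUnit a := by
  obtain ⟨b, hb⟩ := h.exists_right_inv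
  obtain ⟨b, rfl⟩ := Ideal.Quotient.mk_surjective b
  rw [← _root_.map_mul, ← map_one (Ideal.Quotient.mk J)] at hb
  have hmem : a * b - 1 ∈ Ideal.jacobson ⊥ := hJ (Ideal.Quotient.eq.mp hb)
  have : IsUnit (a * b) := Ideal.isUnit_of_sub_one_mem_jacobson_bot _ hmem
  exact isUnit_of_mul_isUnit_left this

/-- Product of row-clearing elementary matrices lies in `GE_n(R)`. -/
lemma exists_clearing (k : Fin n) (c : Fin n → R) (s : Finset (Fin n)) (hs : k ∉ s) :
    ∃ g ∈ GESubgroup R n,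
      (g : Matrix (Fin n) (Fin n) R) = 1 + ∑ i ∈ s, single i k (c i) := by
  classical
  induction s using Finset.induction with
  | empty => exact ⟨1, one_mem _, by simp⟩
  | @insert i s hi ih =>
    have hik : i ≠ k := fun h => hs (h ▸ Finset.mem_insert_self i s)
    have hks : k ∉ s := fun h => hs (Finset.mem_insert_of_mem h)
    obtain ⟨g, hg, hgval⟩ := ih hks
    refine ⟨elemGL i k hik (c i) * g, mul_mem (elemGL_mem i k hik (c i)) hg, ?_⟩
    have hzero : single i k (c i) * ∑ j ∈ s, single j k (c j) = 0 := by
      rw [Finset.mul_sum]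
      refine Finset.sum_eq_zero fun j hj => ?_
      exact Matrix.single_mul_single_of_ne (c i) i k j
        (fun h => hks (h ▸ hj)) (c j)
    have : ((elemGL i k hik (c i) * g : GL (Fin n) R) : Matrix (Fin n) (Fin n) R)
        = (1 + single i k (c i)) * (1 + ∑ j ∈ s, single j k (c j)) := by
      rw [Units.val_mul, elemGL_val, hgval]
    rw [this, add_mul, mul_add, mul_add, one_mul, mul_one, hzero,
      Finset.sum_insert hi, one_mul]
    abel

lemma mem_GE_of_cols_done {J : Ideal R} (hJ : J ≤ Ideal.jacobson ⊥) :
    ∀ (m : ℕ) (A : GL (Fin n) R),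
    (∀ i j, (A : Matrix (Fin n) (Fin n) R) i j - (1 : Matrix (Fin n) (Fin n) R) i j ∈ J) →
    (∀ j i : Fin n, (j : ℕ) < n - m →
      (A : Matrix (Fin n) (Fin n) R) i j = (1 : Matrix (Fin n) (Fin n) R) i j) →
    A ∈ GESubgroup R n := by
  intro m
  induction m with
  | zero =>
    intro A _ hcols
    have hA1 : (A : Matrix (Fin n) (Fin n) R) = 1 :=
      Matrix.ext fun i j => hcols j i (by omega)
    have : A = 1 := Units.ext hA1
    rw [this]; exact one_mem _
  | succ m ih =>
    intro A hA hcols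
    by_cases hlt : n - (m + 1) < n
    · set k : Fin n := ⟨n - (m + 1), hlt⟩ with hk
      have hkval : (k : ℕ) = n - (m + 1) := rfl
      have hAkk : (A : Matrix (Fin n) (Fin n) R) k k - 1 ∈ J := by
        have := hA k k; rwa [Matrix.one_apply_eq] at this
      have hu : IsUnit ((A : Matrix (Fin n) (Fin n) R) k k) :=
        Ideal.isUnit_of_sub_one_mem_jacobson_bot _ (hJ hAkk)
      set u : Rˣ := hu.unit with hu'
      have huval : (u : R) = (A : Matrix (Fin n) (Fin n) R) k k := hu.unit_spec
      set d : Fin n → Rˣ := fun i => if i = k then u⁻¹ else 1 with hd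
      have hdk : d k = u⁻¹ := by simp [hd]
      have hdi : ∀ i, i ≠ k → d i = 1 := fun i h => by simp [hd, h]
      set N : GL (Fin n) R := diagGL d * A with hN
      have hNval : ∀ i j, (N : Matrix (Fin n) (Fin n) R) i j
          = (d i : R) * (A : Matrix (Fin n) (Fin n) R) i j := by
        intro i j
        rw [hN, Units.val_mul, diagGL_val, diagonal_mul]
      have hNkk : (N : Matrix (Fin n) (Fin n) R) k k = 1 := by
        rw [hNval, hdk, ← huval, Units.inv_mul]
      have hNdone : ∀ j i : Fin n, (j : ℕ) < n - (m + 1) →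
          (N : Matrix (Fin n) (Fin n) R) i j = (1 : Matrix (Fin n) (Fin n) R) i j := by
        intro j i hj
        have hjk : j ≠ k := by
          intro h; rw [h] at hj; omega
        rw [hNval]
        by_cases hik : i = k
        · have hij : i ≠ j := by rw [hik]; exact Ne.symm hjk
          rw [hcols j i hj, Matrix.one_apply_ne hij, mul_zero]
        · rw [hdi i hik, Units.val_one, one_mul]
          exact hcols j i hj
      have hNmod : ∀ i j, (N : Matrix (Fin n) (Fin n) R) i j
          - (1 : Matrix (Fin n) (Fin n) R) i j ∈ J := by
        intro i j
        rw [hNval]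
        by_cases hik : i = k
        · rw [hik, hdk]
          have h1 : (↑u⁻¹ : R) - 1 ∈ J := by
            have e : (↑u⁻¹ : R) - 1
                = -(↑u⁻¹ * ((A : Matrix (Fin n) (Fin n) R) k k - 1)) := by
              rw [mul_sub, ← huval, Units.inv_mul, mul_one]; ring
            rw [e]; exact neg_mem (Ideal.mul_mem_left _ _ hAkk)
          have e2 : (↑u⁻¹ : R) * (A : Matrix (Fin n) (Fin n) R) k j
                - (1 : Matrix (Fin n) (Fin n) R) k j
              = (↑u⁻¹ : R) * ((A : Matrix (Fin n) (Fin n) R) k j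
                  - (1 : Matrix (Fin n) (Fin n) R) k j)
                + ((↑u⁻¹ : R) - 1) * (1 : Matrix (Fin n) (Fin n) R) k j := by ring
          rw [e2]
          exact add_mem (Ideal.mul_mem_left _ _ (hA k j))
            (Ideal.mul_mem_right _ _ h1)
        · rw [hdi i hik, Units.val_one, one_mul]
          exact hA i j
      set c : Fin n → R := fun i => -((N : Matrix (Fin n) (Fin n) R) i k) with hc
      have hcmem : ∀ i, i ≠ k → c i ∈ J := by
        intro i hik
        have := hNmod i k
        rw [Matrix.one_apply_ne hik, sub_zero] at this
        exact neg_mem this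
      obtain ⟨C, hCmem, hCval⟩ := exists_clearing k c (Finset.univ.erase k)
        (Finset.notMem_erase k _)
      set B : GL (Fin n) R := C * N with hB
      have hBval : ∀ i j, (B : Matrix (Fin n) (Fin n) R) i j
          = (N : Matrix (Fin n) (Fin n) R) i j
            + if i = k then 0 else c i * (N : Matrix (Fin n) (Fin n) R) k j := by
        intro i j
        rw [hB, Units.val_mul, hCval, add_mul, one_mul, Finset.sum_mul,
          Matrix.add_apply, Matrix.sum_apply]
        congr 1
        have hterm : ∀ i' ∈ Finset.univ.erase k,
            (single i' k (c i') * (N : Matrix (Fin n) (Fin n) R)) i j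
              = if i' = i then c i * (N : Matrix (Fin n) (Fin n) R) k j else 0 := by
          intro i' _
          by_cases hii : i' = i
          · subst hii; simp
          · rw [if_neg hii]
            exact Matrix.single_mul_apply_of_ne (c i') i' k i j
              (Ne.symm hii) _
        rw [Finset.sum_congr rfl hterm, Finset.sum_ite_eq' (Finset.univ.erase k) i]
        by_cases hik : i = k
        · rw [if_pos hik, if_neg (by simp [hik])]
        · rw [if_neg hik, if_pos (by simp [hik])]
      have hBmod : ∀ i j, (B : Matrix (Fin n) (Fin n) R) i j
          - (1 : Matrix (Fin n) (Fin n) R) i j ∈ J := by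
        intro i j
        rw [hBval]
        by_cases hik : i = k
        · rw [if_pos hik, add_zero]; exact hNmod i j
        · rw [if_neg hik]
          have e : (N : Matrix (Fin n) (Fin n) R) i j
                + c i * (N : Matrix (Fin n) (Fin n) R) k j
                - (1 : Matrix (Fin n) (Fin n) R) i j
              = ((N : Matrix (Fin n) (Fin n) R) i j
                - (1 : Matrix (Fin n) (Fin n) R) i j)
                + c i * (N : Matrix (Fin n) (Fin n) R) k j := by ring
          rw [e]
          exact add_mem (hNmod i j) (Ideal.mul_mem_right _ _ (hcmem i hik))
      have hBdone : ∀ j i : Fin n, (j : ℕ) < n - m →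
          (B : Matrix (Fin n) (Fin n) R) i j = (1 : Matrix (Fin n) (Fin n) R) i j := by
        intro j i hj
        have hj' : (j : ℕ) < n - (m + 1) ∨ j = k := by
          rcases lt_or_ge (j : ℕ) (n - (m + 1)) with h | h
          · exact Or.inl h
          · right; apply Fin.ext; rw [hkval]; omega
        rcases hj' with h | h
        · have hjk : k ≠ j := by
            intro hkj; rw [← hkj] at h; omega
          rw [hBval, hNdone j i h, hNdone j k h]
          rw [Matrix.one_apply_ne hjk, mul_zero, ite_self, add_zero]
        · rw [h]
          by_cases hik : i = k
          · rw [hBval, if_pos hik, add_zero, hik, hNkk, Matrix.one_apply_eq]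
          · rw [hBval, if_neg hik, hNkk, mul_one, hc]
            simp only [add_neg_cancel]
            rw [Matrix.one_apply_ne hik]
      have hmemB : B ∈ GESubgroup R n := ih B hBmod hBdone
      have hAeq : A = (diagGL d)⁻¹ * (C⁻¹ * B) := by
        rw [hB, hN]; group
      rw [hAeq]
      exact mul_mem (inv_mem (diagGL_mem d)) (mul_mem (inv_mem hCmem) hmemB)
    · exact ih A hA (fun j i hj => hcols j i (by omega))

lemma mem_GE_of_reduction_one {J : Ideal R} (hJ : J ≤ Ideal.jacobson ⊥) (A : GL (Fin n) R)
    (hA : ∀ i j, (A : Matrix (Fin n) (Fin n) R) i j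
      - (1 : Matrix (Fin n) (Fin n) R) i j ∈ J) :
    A ∈ GESubgroup R n :=
  mem_GE_of_cols_done hJ n A hA (fun j _ hj => absurd hj (by omega))

variable {S : Type} [CommRing S]

lemma map_GE_le (f : R →+* S) :
    (GESubgroup R n).map (Matrix.GeneralLinearGroup.map (n := Fin n) f)
      ≤ GESubgroup S n := by
  rw [GESubgroup, MonoidHom.map_closure]
  refine (Subgroup.closure_le _).2 ?_
  rintro x ⟨y, hy, rfl⟩
  have hmapval : ((Matrix.GeneralLinearGroup.map f y : GL (Fin n) S) :
      Matrix (Fin n) (Fin n) S) = ((y : Matrix (Fin n) (Fin n) R)).map f := rfl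
  rcases hy with ⟨i, j, r, hij, hval⟩ | ⟨dd, hval⟩
  · apply Subgroup.subset_closure
    left
    refine ⟨i, j, f r, hij, ?_⟩
    rw [hmapval, hval]
    ext a b
    simp [Matrix.map_apply, Matrix.add_apply, Matrix.one_apply, Matrix.single,
      Matrix.of_apply, apply_ite f]
  · apply Subgroup.subset_closure
    right
    refine ⟨fun i => Units.map f.toMonoidHom (dd i), ?_⟩
    rw [hmapval, hval, Matrix.diagonal_map (map_zero f)]
    rfl

end GEAux

/-- If `J` is contained in the Jacobson radical of `R`, then for each `n ≥ 2`,
`GL_n(R) = GE_n(R)` if and only if `GL_n(R/J) = GE_n(R/J)`. -/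
theorem stmt_5 (R : Type) [CommRing R] (J : Ideal R) (hJ : J ≤ Ideal.jacobson ⊥)
    (n : ℕ) (hn : 2 ≤ n) :
    GESubgroup R n = ⊤ ↔ GESubgroup (R ⧸ J) n = ⊤ := by
  classical
  set f := Ideal.Quotient.mk J with hf
  set π : GL (Fin n) R →* GL (Fin n) (R ⧸ J) := Matrix.GeneralLinearGroup.map f with hπ
  have hπval : ∀ A : GL (Fin n) R, ((π A : GL (Fin n) (R ⧸ J)) :
      Matrix (Fin n) (Fin n) (R ⧸ J)) = ((A : Matrix (Fin n) (Fin n) R)).map f := fun _ => rfl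
  constructor
  · intro h
    rw [Subgroup.eq_top_iff']
    intro M
    choose a ha using fun i j =>
      Ideal.Quotient.mk_surjective ((M : Matrix (Fin n) (Fin n) (R ⧸ J)) i j)
    have hmap : (Matrix.of a).map f = (M : Matrix (Fin n) (Fin n) (R ⧸ J)) := by
      ext i j; exact ha i j
    have hdet : IsUnit ((Matrix.of a).det) := by
      apply GEAux.isUnit_of_isUnit_mk hJ
      rw [RingHom.map_det, RingHom.mapMatrix_apply, hmap]
      exact (Matrix.isUnit_iff_isUnit_det _).mp M.isUnit
    have hunit : IsUnit (Matrix.of a) := (Matrix.isUnit_iff_isUnit_det _).mpr hdet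
    set A : GL (Fin n) R := hunit.unit with hA
    have hπA : π A = M := by
      apply Units.ext
      rw [hπval]
      show ((hunit.unit : Matrix (Fin n) (Fin n) R)).map f = _
      rw [hunit.unit_spec, hmap]
    have hAmem : A ∈ GESubgroup R n := h ▸ Subgroup.mem_top A
    exact hπA ▸ GEAux.map_GE_le f ⟨A, hAmem, rfl⟩
  · intro h
    rw [Subgroup.eq_top_iff']
    intro A
    have hge : GESubgroup (R ⧸ J) n ≤ (GESubgroup R n).map π := by
      rw [GESubgroup]
      refine (Subgroup.closure_le _).2 ?_
      rintro x (⟨i, j, r, hij, hx⟩ | ⟨dd, hx⟩)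
      · obtain ⟨r', hr'⟩ := Ideal.Quotient.mk_surjective r
        refine ⟨GEAux.elemGL i j hij r', GEAux.elemGL_mem i j hij r', ?_⟩
        apply Units.ext
        rw [hπval, GEAux.elemGL_val, hx, ← hr']
        ext a b
        simp [Matrix.map_apply, Matrix.add_apply, Matrix.one_apply,
          Matrix.single, Matrix.of_apply, apply_ite f, hf, apply_ite (Ideal.Quotient.mk J)]
      · choose aa haa using fun i => Ideal.Quotient.mk_surjective ((dd i : R ⧸ J))
        have hu : ∀ i, IsUnit (aa i) := fun i =>
          GEAux.isUnit_of_isUnit_mk hJ (by rw [haa]; exact (dd i).isUnit)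
        refine ⟨GEAux.diagGL (fun i => (hu i).unit), GEAux.diagGL_mem _, ?_⟩
        apply Units.ext
        rw [hπval, GEAux.diagGL_val, hx, Matrix.diagonal_map (map_zero f)]
        congr 1
        ext i
        simp [Function.comp, (hu i).unit_spec, haa, hf]
    have hmem : π A ∈ (GESubgroup R n).map π := hge (h ▸ Subgroup.mem_top (π A))
    obtain ⟨B, hB, hBA⟩ := hmem
    have hC : A * B⁻¹ ∈ GESubgroup R n := by
      apply GEAux.mem_GE_of_reduction_one hJ
      intro i j
      have h1 : π (A * B⁻¹) = 1 := by
        rw [_root_.map_mul, map_inv π, ← hBA, mul_inv_cancel]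
      have h2 : ((A * B⁻¹ : GL (Fin n) R) : Matrix (Fin n) (Fin n) R).map f = 1 := by
        rw [← hπval, h1, Units.val_one]
      have h3 : f (((A * B⁻¹ : GL (Fin n) R) : Matrix (Fin n) (Fin n) R) i j)
          = f ((1 : Matrix (Fin n) (Fin n) R) i j) := by
        have := congrFun (congrFun h2 i) j
        rw [Matrix.map_apply] at this
        rw [this]
        by_cases hij : i = j
        · rw [hij, Matrix.one_apply_eq, Matrix.one_apply_eq, _root_.map_one]
        · rw [Matrix.one_apply_ne hij, Matrix.one_apply_ne hij, _root_.map_zero]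
      exact Ideal.Quotient.eq.mp h3
    have hAeq : A = (A * B⁻¹) * B := by group
    rw [hAeq]
    exact mul_mem hC hB
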